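/- With the trajectory and greedy setup, suppose each action a_t lies in the box [-1,1]^m and maximizes Q_t over [-1,1]^m, and suppose the value-gradients G_t := ∇Ṽ(x_t) satisfy G_F = 0 and the costate recursion G_t = ∇_x r(x_t, a_t) + γ (D_x f(x_t, a_t))ᵀ G_{t+1} for 0 ≤ t < F. Then the trajectory is locally extremal: viewing the total reward R as a differentiable function of the action tuple (a₀,…,a_{F−1}) with x₀ fixed, for every t and every coordinate i: if a_t^i ∈ (-1,1) and ∂Q_t/∂a^i(a_t) = 0 then ∂R/∂(a_t^i) = 0; if a_t^i = 1 then ∂R/∂(a_t^i) ≥ 0, with strict inequality when ∂Q_t/∂a^i(a_t) ≠ 0; and if a_t^i = -1 then ∂R/∂(a_t^i) ≤ 0, with strict inequality when ∂Q_t/∂a^i(a_t) ≠ 0. -/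

import Mathlib

open Topology Filter Set


open Matrix

/-- Gradient of a scalar function, as a vector of partial derivatives. -/
noncomputable def grad {k : ℕ} (g : (Fin k → ℝ) → ℝ) (x : Fin k → ℝ) : Fin k → ℝ :=
  fun i => fderiv ℝ g x (Pi.single i 1)

/-- Gradient of `r` in the state variable. -/
noncomputable def gradX {n m : ℕ} (r : (Fin n → ℝ) × (Fin m → ℝ) → ℝ)
    (x : Fin n → ℝ) (a : Fin m → ℝ) : Fin n → ℝ :=
  fun i => fderiv ℝ (fun y => r (y, a)) x (Pi.single i 1)

/-- Jacobian of `f` in the state variable (rows indexed by output components). -/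
noncomputable def jacX {n m : ℕ} (f : (Fin n → ℝ) × (Fin m → ℝ) → Fin n → ℝ)
    (x : Fin n → ℝ) (a : Fin m → ℝ) : Matrix (Fin n) (Fin n) ℝ :=
  Matrix.of fun j i => fderiv ℝ (fun y => f (y, a) j) x (Pi.single i 1)

/-- Extend a finite action tuple to all of `ℕ` (by `0` beyond `F`). -/
noncomputable def pad {F m : ℕ} (as : Fin F → Fin m → ℝ) : ℕ → Fin m → ℝ :=
  fun t => if h : t < F then as ⟨t, h⟩ else 0

/-- The trajectory generated from `x₀` by the actions `as`. -/
def traj {n m : ℕ} (f : (Fin n → ℝ) × (Fin m → ℝ) → Fin n → ℝ)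
    (x₀ : Fin n → ℝ) (as : ℕ → Fin m → ℝ) : ℕ → Fin n → ℝ
  | 0 => x₀
  | t + 1 => f (traj f x₀ as t, as t)

/-- The total (discounted) reward, as a function of the whole action tuple. -/
noncomputable def Rtot {n m : ℕ} (F : ℕ) (γ : ℝ)
    (f : (Fin n → ℝ) × (Fin m → ℝ) → Fin n → ℝ)
    (r : (Fin n → ℝ) × (Fin m → ℝ) → ℝ)
    (x₀ : Fin n → ℝ) (as : Fin F → Fin m → ℝ) : ℝ :=
  ∑ t ∈ Finset.range F, γ ^ t * r (traj f x₀ (pad as) t, pad as t)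


lemma clm_sum_single {k : ℕ} {E : Type*} [NormedAddCommGroup E] [NormedSpace ℝ E]
    (L : (Fin k → ℝ) →L[ℝ] E) (u : Fin k → ℝ) :
    L u = ∑ i, u i • L (Pi.single i 1) := by
  have h : u = ∑ i, u i • (Pi.single i 1 : Fin k → ℝ) := by
    funext j
    rw [Finset.sum_apply]
    simp [Pi.single_apply]
  conv_lhs => rw [h]
  rw [map_sum]
  simp [L.map_smul]

lemma grad_dot {k : ℕ} (g : (Fin k → ℝ) → ℝ) (x : Fin k → ℝ)
    (hg : DifferentiableAt ℝ g x) (u : Fin k → ℝ) :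
    grad g x ⬝ᵥ u = fderiv ℝ g x u := by
  rw [clm_sum_single (fderiv ℝ g x) u, dotProduct]
  exact Finset.sum_congr rfl fun i _ => by simp [grad, mul_comm]

lemma gradX_dot {n m : ℕ} (r : (Fin n → ℝ) × (Fin m → ℝ) → ℝ)
    (hr : Differentiable ℝ r) (x : Fin n → ℝ) (b : Fin m → ℝ) (u : Fin n → ℝ) :
    gradX r x b ⬝ᵥ u = fderiv ℝ (fun y => r (y, b)) x u := by
  have hd : DifferentiableAt ℝ (fun y => r (y, b)) x :=
    (hr (x, b)).comp x (differentiableAt_id.prodMk (differentiableAt_const b))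
  rw [clm_sum_single (fderiv ℝ (fun y => r (y, b)) x) u, dotProduct]
  exact Finset.sum_congr rfl fun i _ => by simp [gradX, mul_comm]

lemma fderiv_comp_proj {n : ℕ} {α : Type*} [NormedAddCommGroup α] [NormedSpace ℝ α]
    (ψ : α → Fin n → ℝ) (x : α) (hψ : DifferentiableAt ℝ ψ x) (j : Fin n) (u : α) :
    fderiv ℝ (fun y => ψ y j) x u = fderiv ℝ ψ x u j := by
  have h := (ContinuousLinearMap.proj (R := ℝ) (φ := fun _ : Fin n => ℝ) j).hasFDerivAt.comp x hψ.hasFDerivAt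
  have h2 : HasFDerivAt (fun y => ψ y j)
      ((ContinuousLinearMap.proj (R := ℝ) (φ := fun _ : Fin n => ℝ) j).comp (fderiv ℝ ψ x)) x := h
  rw [h2.fderiv]
  rfl

lemma jac_mulVec {n m : ℕ} (f : (Fin n → ℝ) × (Fin m → ℝ) → Fin n → ℝ)
    (hf : Differentiable ℝ f) (x : Fin n → ℝ) (b : Fin m → ℝ) (u : Fin n → ℝ) :
    (jacX f x b).mulVec u = fderiv ℝ (fun y => f (y, b)) x u := by
  have hd : DifferentiableAt ℝ (fun y => f (y, b)) x :=
    (hf (x, b)).comp x (differentiableAt_id.prodMk (differentiableAt_const b))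
  have hdj : ∀ j : Fin n, DifferentiableAt ℝ (fun y => f (y, b) j) x := fun j =>
    ((ContinuousLinearMap.proj (R := ℝ) (φ := fun _ : Fin n => ℝ) j).differentiableAt).comp x hd
  funext j
  rw [mulVec, dotProduct, ← fderiv_comp_proj _ _ hd j,
    clm_sum_single (k := n) (fderiv ℝ (fun y => f (y, b) j) x) u]
  exact Finset.sum_congr rfl fun i _ => by simp [jacX, mul_comm]

lemma max_right {m : ℕ} (g : (Fin m → ℝ) → ℝ) (b : Fin m → ℝ)
    (hg : DifferentiableAt ℝ g b)
    (hb : ∀ j, b j ∈ Set.Icc (-1:ℝ) 1)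
    (hmax : ∀ c : Fin m → ℝ, (∀ j, c j ∈ Set.Icc (-1:ℝ) 1) → g c ≤ g b)
    (i : Fin m) (hi : b i = 1) :
    0 ≤ fderiv ℝ g b (Pi.single i 1) := by
  set d := fderiv ℝ g b (Pi.single i 1) with hd
  set ψ : ℝ → ℝ := fun h => g (b + h • (Pi.single i 1 : Fin m → ℝ)) with hψdef
  have h0 : b + (0:ℝ) • (Pi.single i 1 : Fin m → ℝ) = b := by simp
  have hpath : HasDerivAt (fun h : ℝ => b + h • (Pi.single i 1 : Fin m → ℝ))
      (Pi.single i 1) 0 := by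
    simpa using ((hasDerivAt_id (0:ℝ)).smul_const (Pi.single i 1 : Fin m → ℝ)).const_add b
  have hψ : HasDerivAt ψ d 0 := by
    have hg' : HasFDerivAt g (fderiv ℝ g b)
        ((fun h : ℝ => b + h • (Pi.single i 1 : Fin m → ℝ)) 0) := by
      simpa [h0] using hg.hasFDerivAt
    exact hg'.comp_hasDerivAt 0 hpath
  have hmono : ∀ h ∈ Set.Icc (-2:ℝ) 0, ψ h ≤ g b := by
    intro h hh
    apply hmax
    intro j
    by_cases hj : j = i
    · subst hj
      simp only [Pi.add_apply, Pi.smul_apply, Pi.single_eq_same, smul_eq_mul, mul_one, hi]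
      constructor <;> [linarith [hh.1]; linarith [hh.2]]
    · simpa [Pi.single_apply, hj] using hb j
  have hsl : Filter.Tendsto (slope ψ 0) (𝓝[Set.Iio 0 \ {0}] 0) (𝓝 d) :=
    hasDerivWithinAt_iff_tendsto_slope.1 (hψ.hasDerivWithinAt (s := Set.Iio 0))
  have hset : (Set.Iio (0:ℝ)) \ {0} = Set.Iio 0 := by
    ext y; simp only [Set.mem_diff, Set.mem_Iio, Set.mem_singleton_iff]
    exact ⟨fun h => h.1, fun h => ⟨h, ne_of_lt h⟩⟩
  rw [hset] at hsl
  have hev : ∀ᶠ y in 𝓝[Set.Iio (0:ℝ)] 0, 0 ≤ slope ψ 0 y := by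
    filter_upwards [Ioo_mem_nhdsLT (by norm_num : (-2:ℝ) < 0)] with y hy
    rw [slope_def_field]
    have h1 : ψ y - ψ 0 ≤ 0 := by
      have := hmono y ⟨le_of_lt hy.1, le_of_lt hy.2⟩
      have hψ0 : ψ 0 = g b := by simp [hψdef, h0]
      linarith
    have h2 : y - 0 ≤ 0 := by linarith [hy.2]
    have h3 := div_nonneg (neg_nonneg.2 h1) (neg_nonneg.2 h2)
    rwa [neg_div_neg_eq] at h3
  exact ge_of_tendsto hsl hev

lemma max_left {m : ℕ} (g : (Fin m → ℝ) → ℝ) (b : Fin m → ℝ)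
    (hg : DifferentiableAt ℝ g b)
    (hb : ∀ j, b j ∈ Set.Icc (-1:ℝ) 1)
    (hmax : ∀ c : Fin m → ℝ, (∀ j, c j ∈ Set.Icc (-1:ℝ) 1) → g c ≤ g b)
    (i : Fin m) (hi : b i = -1) :
    fderiv ℝ g b (Pi.single i 1) ≤ 0 := by
  have hneg : DifferentiableAt ℝ (fun c : Fin m → ℝ => -c) (-b) := by
    exact (differentiableAt_id (𝕜 := ℝ) (x := -b)).neg
  have hgn : DifferentiableAt ℝ (fun c : Fin m → ℝ => g (-c)) (-b) := by
    have : DifferentiableAt ℝ g (-(-b)) := by simpa using hg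
    exact this.comp (-b) hneg
  have key := max_right (fun c => g (-c)) (-b) hgn
    (fun j => by have := hb j; simp only [Pi.neg_apply, Set.mem_Icc] at *; constructor <;> linarith [this.1, this.2])
    (fun c hc => by
      simpa using hmax (-c) (fun j => by
        have := hc j
        simp only [Pi.neg_apply, Set.mem_Icc] at *
        constructor <;> linarith [this.1, this.2]))
    i (by simp [hi])
  have hcomp : fderiv ℝ (fun c : Fin m → ℝ => g (-c)) (-b) (Pi.single i 1)
      = - fderiv ℝ g b (Pi.single i 1) := by
    have h1 : HasFDerivAt (fun c : Fin m → ℝ => -c)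
        (-(ContinuousLinearMap.id ℝ (Fin m → ℝ))) (-b) := by
      exact (hasFDerivAt_id (𝕜 := ℝ) (-b)).neg
    have hg' : HasFDerivAt g (fderiv ℝ g b) (-(-b)) := by simpa using hg.hasFDerivAt
    have h2 : HasFDerivAt (fun c : Fin m → ℝ => g (-c))
        ((fderiv ℝ g b).comp (-(ContinuousLinearMap.id ℝ (Fin m → ℝ)))) (-b) :=
      hg'.comp (-b) h1
    rw [h2.fderiv]
    simp
  rw [hcomp] at key
  linarith

lemma fderiv_partial_fst {n m : ℕ} {E : Type*} [NormedAddCommGroup E] [NormedSpace ℝ E]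
    (φ : (Fin n → ℝ) × (Fin m → ℝ) → E) (hφ : Differentiable ℝ φ)
    (x : Fin n → ℝ) (b : Fin m → ℝ) (u : Fin n → ℝ) :
    fderiv ℝ (fun y => φ (y, b)) x u = fderiv ℝ φ (x, b) (u, 0) := by
  have h1 : HasFDerivAt (fun y : Fin n → ℝ => (y, b))
      ((ContinuousLinearMap.id ℝ (Fin n → ℝ)).prod 0) x :=
    (hasFDerivAt_id x).prodMk (hasFDerivAt_const b x)
  have h2 : HasFDerivAt (fun y => φ (y, b))
      ((fderiv ℝ φ (x, b)).comp ((ContinuousLinearMap.id ℝ (Fin n → ℝ)).prod 0)) x :=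
    (hφ (x, b)).hasFDerivAt.comp x h1
  rw [h2.fderiv]
  rfl

lemma fderiv_partial_snd {n m : ℕ} {E : Type*} [NormedAddCommGroup E] [NormedSpace ℝ E]
    (φ : (Fin n → ℝ) × (Fin m → ℝ) → E) (hφ : Differentiable ℝ φ)
    (x : Fin n → ℝ) (b : Fin m → ℝ) (u : Fin m → ℝ) :
    fderiv ℝ (fun c => φ (x, c)) b u = fderiv ℝ φ (x, b) (0, u) := by
  have h1 : HasFDerivAt (fun c : Fin m → ℝ => (x, c))
      ((0 : (Fin m → ℝ) →L[ℝ] (Fin n → ℝ)).prod (ContinuousLinearMap.id ℝ (Fin m → ℝ))) b :=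
    (hasFDerivAt_const x b).prodMk (hasFDerivAt_id b)
  have h2 : HasFDerivAt (fun c => φ (x, c))
      ((fderiv ℝ φ (x, b)).comp ((0 : (Fin m → ℝ) →L[ℝ] (Fin n → ℝ)).prod (ContinuousLinearMap.id ℝ (Fin m → ℝ)))) b :=
    (hφ (x, b)).hasFDerivAt.comp b h1
  rw [h2.fderiv]
  rfl


/-- evaluation CLM for `pad` -/
noncomputable def padL (F m : ℕ) (s : ℕ) : ((Fin F → Fin m → ℝ) →L[ℝ] (Fin m → ℝ)) :=
  if h : s < F then ContinuousLinearMap.proj (⟨s, h⟩ : Fin F) else 0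

lemma padL_eq {F m : ℕ} (s : ℕ) :
    (fun as : Fin F → Fin m → ℝ => pad as s) = ⇑(padL F m s) := by
  funext as
  simp only [pad, padL]
  split
  · rfl
  · rfl

theorem key {n m : ℕ} (F : ℕ) (γ : ℝ)
    (f : (Fin n → ℝ) × (Fin m → ℝ) → Fin n → ℝ)
    (r : (Fin n → ℝ) × (Fin m → ℝ) → ℝ)
    (hf : ContDiff ℝ 1 f) (hr : ContDiff ℝ 1 r)
    (V : (Fin n → ℝ) → ℝ) (hV : Differentiable ℝ V)
    (x₀ : Fin n → ℝ) (a : Fin F → Fin m → ℝ)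
    (x : ℕ → Fin n → ℝ) (hxdef : x = traj f x₀ (pad a))
    (Q : ℕ → (Fin m → ℝ) → ℝ)
    (hQdef : ∀ t, Q t = fun b => r (x t, b) + γ * V (f (x t, b)))
    (G : ℕ → Fin n → ℝ) (hGdef : ∀ t, G t = grad V (x t))
    (hGF : G F = 0)
    (hGrec : ∀ t < F, G t =
      gradX r (x t) (pad a t) + γ • (jacX f (x t) (pad a t))ᵀ.mulVec (G (t + 1))) :
    DifferentiableAt ℝ (Rtot F γ f r x₀) a ∧
    ∀ (t : Fin F) (i : Fin m),
      fderiv ℝ (Rtot F γ f r x₀) a (Pi.single t (Pi.single i 1)) =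
        γ ^ (t : ℕ) * fderiv ℝ (Q t) (a t) (Pi.single i 1) := by
  classical
  have hfd : Differentiable ℝ f := hf.differentiable one_ne_zero
  have hrd : Differentiable ℝ r := hr.differentiable one_ne_zero
  -- the state at time s as a function of the action tuple
  set X : ℕ → (Fin F → Fin m → ℝ) → (Fin n → ℝ) :=
    fun s as => traj f x₀ (pad as) s with hXdef
  have hXsucc : ∀ s as, X (s + 1) as = f (X s as, pad as s) := fun s as => rfl
  have hXa : ∀ s, X s a = x s := fun s => by rw [hxdef]
  -- differentiability of X s
  have hXdiff : ∀ s, Differentiable ℝ (X s) := by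
    intro s
    induction s with
    | zero => exact differentiable_const x₀
    | succ s ih =>
      intro as
      have hinner : DifferentiableAt ℝ (fun as' => (X s as', pad as' s)) as := by
        refine (ih as).prodMk ?_
        rw [padL_eq]
        exact (padL F m s).differentiable.differentiableAt
      exact (hfd (X s as, pad as s)).comp as hinner
  -- differentiability of each reward term
  have hterm : ∀ s, Differentiable ℝ (fun as => r (X s as, pad as s)) := by
    intro s as
    have hinner : DifferentiableAt ℝ (fun as' => (X s as', pad as' s)) as := by
      refine (hXdiff s as).prodMk ?_
      rw [padL_eq]
      exact (padL F m s).differentiable.differentiableAt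
    exact (hrd (X s as, pad as s)).comp as hinner
  have hRfun : Rtot F γ f r x₀ = fun as => ∑ s ∈ Finset.range F, γ ^ s * r (X s as, pad as s) :=
    rfl
  have hRdiff : DifferentiableAt ℝ (Rtot F γ f r x₀) a := by
    rw [hRfun]
    exact DifferentiableAt.fun_sum fun s _ => ((hterm s a).const_mul _)
  refine ⟨hRdiff, ?_⟩
  intro t i
  set e : Fin F → Fin m → ℝ := Pi.single t (Pi.single i 1) with hedef
  -- the derivative of the padded evaluation in direction e
  have hpadL_e : ∀ s (h : s < F), padL F m s e = if (⟨s, h⟩ : Fin F) = t then Pi.single i 1 else 0 := by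
    intro s h
    simp only [padL, dif_pos h, ContinuousLinearMap.proj_apply, hedef]
    rw [Pi.single_apply]
  -- derivative recursion for X
  have hpadDiff : ∀ s, DifferentiableAt ℝ (fun as' : Fin F → Fin m → ℝ => pad as' s) a := by
    intro s
    rw [padL_eq]
    exact (padL F m s).differentiable.differentiableAt
  have hpadfd : ∀ s, fderiv ℝ (fun as' : Fin F → Fin m → ℝ => pad as' s) a = padL F m s := by
    intro s
    rw [padL_eq]
    exact (padL F m s).fderiv
  have hXfd : ∀ s, fderiv ℝ (X (s + 1)) a e =
      fderiv ℝ f (X s a, pad a s) (fderiv ℝ (X s) a e, padL F m s e) := by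
    intro s
    have hinner : DifferentiableAt ℝ (fun as' : Fin F → Fin m → ℝ => (X s as', pad as' s)) a :=
      (hXdiff s a).prodMk (hpadDiff s)
    have hcomp : fderiv ℝ (X (s + 1)) a =
        (fderiv ℝ f (X s a, pad a s)).comp
          (fderiv ℝ (fun as' : Fin F → Fin m → ℝ => (X s as', pad as' s)) a) :=
      fderiv_comp a (hfd (X s a, pad a s)) hinner
    rw [hcomp, DifferentiableAt.fderiv_prodMk (hXdiff s a) (hpadDiff s), hpadfd s]
    rfl
  -- the derivative of X s vanishes for s ≤ t
  have hδ0 : ∀ s, s ≤ (t : ℕ) → fderiv ℝ (X s) a e = 0 := by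
    intro s
    induction s with
    | zero =>
      intro _
      have : X 0 = fun _ => x₀ := rfl
      rw [this, fderiv_fun_const]
      rfl
    | succ s ih =>
      intro hs
      have hslt : s < (t : ℕ) := hs
      have hP0 : padL F m s e = 0 := by
        have hsF : s < F := lt_trans hslt t.isLt
        rw [hpadL_e s hsF, if_neg]
        intro hc
        rw [← hc] at hslt
        simp at hslt
      rw [hXfd s, ih (le_of_lt hslt), hP0]
      exact (fderiv ℝ f (X s a, pad a s)).map_zero
  -- value at time t+1
  have hδt1 : fderiv ℝ (X ((t : ℕ) + 1)) a e =
      fderiv ℝ f (X t a, pad a t) (0, Pi.single i 1) := by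
    rw [hXfd t, hδ0 t le_rfl]
    congr 1
    rw [hpadL_e t t.isLt, if_pos (Fin.eta t t.isLt)]
  -- telescoping sum via the costate recursion
  have tele : ∀ k u, u + k = F → (t : ℕ) + 1 ≤ u →
      ∑ s ∈ Finset.Ico u F,
          γ ^ s * fderiv ℝ r (X s a, pad a s) (fderiv ℝ (X s) a e, padL F m s e) =
        γ ^ u * (G u ⬝ᵥ fderiv ℝ (X u) a e) := by
    intro k
    induction k with
    | zero =>
      intro u hu _
      rw [Nat.add_zero] at hu
      subst hu
      rw [Finset.Ico_self, Finset.sum_empty, hGF]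
      simp
    | succ k ih =>
      intro u hu htu
      have hult : u < F := by omega
      have hPu : padL F m u e = 0 := by
        rw [hpadL_e u hult, if_neg]
        intro hc
        have : u = (t : ℕ) := by rw [← hc]
        omega
      rw [Finset.sum_eq_sum_Ico_succ_bot hult, ih (u + 1) (by omega) (by omega), hPu]
      have hx : x u = X u a := (hXa u).symm
      have hGu := hGrec u hult
      rw [hx] at hGu
      set δ := fderiv ℝ (X u) a e with hδdef
      have hδ1 : fderiv ℝ (X (u + 1)) a e = fderiv ℝ f (X u a, pad a u) (δ, 0) := by
        rw [hXfd u, hPu]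
      have hdot : G u ⬝ᵥ δ =
          fderiv ℝ r (X u a, pad a u) (δ, 0) + γ * (G (u + 1) ⬝ᵥ fderiv ℝ (X (u + 1)) a e) := by
        rw [hGu, add_dotProduct, smul_dotProduct]
        congr 1
        · rw [gradX_dot r hrd _ _ δ]
          exact fderiv_partial_fst r hrd (X u a) (pad a u) δ
        · rw [smul_eq_mul]
          congr 1
          rw [Matrix.mulVec_transpose, ← Matrix.dotProduct_mulVec,
            jac_mulVec f hfd _ _ δ, hδ1]
          congr 1
          exact fderiv_partial_fst f hfd (X u a) (pad a u) δ
      rw [hdot]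
      ring
  -- the total derivative of Rtot in direction e
  have hRsum : fderiv ℝ (Rtot F γ f r x₀) a e =
      ∑ s ∈ Finset.range F,
        γ ^ s * fderiv ℝ r (X s a, pad a s) (fderiv ℝ (X s) a e, padL F m s e) := by
    rw [hRfun]
    rw [fderiv_fun_sum (fun s _ => ((hterm s a).const_mul _))]
    rw [ContinuousLinearMap.sum_apply]
    refine Finset.sum_congr rfl fun s _ => ?_
    rw [fderiv_const_mul (hterm s a)]
    simp only [ContinuousLinearMap.smul_apply, smul_eq_mul]
    congr 1
    have hinner : DifferentiableAt ℝ (fun as' : Fin F → Fin m → ℝ => (X s as', pad as' s)) a :=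
      (hXdiff s a).prodMk (hpadDiff s)
    have hcomp : fderiv ℝ (fun as => r (X s as, pad as s)) a =
        (fderiv ℝ r (X s a, pad a s)).comp
          (fderiv ℝ (fun as' : Fin F → Fin m → ℝ => (X s as', pad as' s)) a) :=
      fderiv_comp a (hrd (X s a, pad a s)) hinner
    rw [hcomp, DifferentiableAt.fderiv_prodMk (hXdiff s a) (hpadDiff s), hpadfd s]
    rfl
  -- split the range sum at t
  have hbound : (t : ℕ) + 1 ≤ F := t.isLt
  have hsplit : ∑ s ∈ Finset.range F,
        γ ^ s * fderiv ℝ r (X s a, pad a s) (fderiv ℝ (X s) a e, padL F m s e) =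
      (∑ s ∈ Finset.range ((t : ℕ) + 1),
        γ ^ s * fderiv ℝ r (X s a, pad a s) (fderiv ℝ (X s) a e, padL F m s e)) +
      ∑ s ∈ Finset.Ico ((t : ℕ) + 1) F,
        γ ^ s * fderiv ℝ r (X s a, pad a s) (fderiv ℝ (X s) a e, padL F m s e) := by
    rw [Finset.range_eq_Ico, Finset.range_eq_Ico]
    exact (Finset.sum_Ico_consecutive _ (Nat.zero_le _) hbound).symm
  have hzero : ∑ s ∈ Finset.range ((t : ℕ) + 1),
        γ ^ s * fderiv ℝ r (X s a, pad a s) (fderiv ℝ (X s) a e, padL F m s e) =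
      γ ^ (t : ℕ) * fderiv ℝ r (X (t : ℕ) a, pad a (t : ℕ)) (0, Pi.single i 1) := by
    rw [Finset.sum_range_succ]
    have h1 : ∑ s ∈ Finset.range (t : ℕ),
        γ ^ s * fderiv ℝ r (X s a, pad a s) (fderiv ℝ (X s) a e, padL F m s e) = 0 := by
      refine Finset.sum_eq_zero fun s hs => ?_
      have hst : s < (t : ℕ) := Finset.mem_range.1 hs
      have hP0 : padL F m s e = 0 := by
        rw [hpadL_e s (lt_trans hst t.isLt), if_neg]
        intro hc
        have : s = (t : ℕ) := by rw [← hc]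
        omega
      rw [hδ0 s (le_of_lt hst), hP0]
      rw [show ((0 : Fin n → ℝ), (0 : Fin m → ℝ)) = (0 : (Fin n → ℝ) × (Fin m → ℝ)) from rfl]
      rw [(fderiv ℝ r (X s a, pad a s)).map_zero, mul_zero]
    rw [h1, zero_add, hδ0 (t : ℕ) le_rfl, hpadL_e (t : ℕ) t.isLt,
      if_pos (Fin.eta t t.isLt)]
  have htele := tele (F - ((t : ℕ) + 1)) ((t : ℕ) + 1) (by omega) le_rfl
  have hRval : fderiv ℝ (Rtot F γ f r x₀) a e =
      γ ^ (t : ℕ) * fderiv ℝ r (X (t : ℕ) a, pad a (t : ℕ)) (0, Pi.single i 1) +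
      γ ^ ((t : ℕ) + 1) *
        (G ((t : ℕ) + 1) ⬝ᵥ fderiv ℝ f (X (t : ℕ) a, pad a (t : ℕ)) (0, Pi.single i 1)) := by
    rw [hRsum, hsplit, hzero, htele, hδt1]
  -- the Q-side computation
  have hxt : X (t : ℕ) a = x (t : ℕ) := hXa (t : ℕ)
  have hpad_t : pad a (t : ℕ) = a t := by
    simp only [pad, t.isLt, dif_pos, Fin.eta]
  have hxt1 : x ((t : ℕ) + 1) = f (x (t : ℕ), a t) := by
    rw [hxdef, ← hpad_t]
    rfl
  have hr1 : DifferentiableAt ℝ (fun b => r (x (t : ℕ), b)) (a t) :=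
    (hrd _).comp _ ((differentiableAt_const _).prodMk differentiableAt_id)
  have hf1 : DifferentiableAt ℝ (fun b => f (x (t : ℕ), b)) (a t) :=
    (hfd _).comp _ ((differentiableAt_const _).prodMk differentiableAt_id)
  have hV1 : DifferentiableAt ℝ (fun b => V (f (x (t : ℕ), b))) (a t) :=
    (hV _).comp _ hf1
  have hQfd : fderiv ℝ (Q t) (a t) (Pi.single i 1) =
      fderiv ℝ r (x (t : ℕ), a t) (0, Pi.single i 1) +
      γ * (G ((t : ℕ) + 1) ⬝ᵥ fderiv ℝ f (x (t : ℕ), a t) (0, Pi.single i 1)) := by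
    rw [hQdef t]
    rw [fderiv_fun_add hr1 (hV1.const_mul γ)]
    rw [ContinuousLinearMap.add_apply]
    congr 1
    · exact fderiv_partial_snd r hrd _ _ _
    · rw [fderiv_const_mul hV1]
      rw [ContinuousLinearMap.smul_apply, smul_eq_mul]
      congr 1
      have hcomp : fderiv ℝ (fun b => V (f (x (t : ℕ), b))) (a t) =
          (fderiv ℝ V (f (x (t : ℕ), a t))).comp
            (fderiv ℝ (fun b => f (x (t : ℕ), b)) (a t)) :=
        fderiv_comp _ (hV _) hf1
      rw [hcomp]
      rw [ContinuousLinearMap.comp_apply]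
      rw [fderiv_partial_snd f hfd _ _ _]
      rw [← grad_dot V _ ((hV _)) _]
      rw [← hxt1, ← hGdef ((t : ℕ) + 1)]
  rw [hRval, hQfd, hxt, hpad_t]
  ring

/-- Theorem 1 of the paper: a greedy trajectory along which the
value-gradients satisfy the costate recursion is locally extremal. -/
theorem stmt6 {n m : ℕ} (F : ℕ) (hF : 1 ≤ F) (γ : ℝ) (hγ : 0 < γ)
    (f : (Fin n → ℝ) × (Fin m → ℝ) → Fin n → ℝ)
    (r : (Fin n → ℝ) × (Fin m → ℝ) → ℝ)
    (hf : ContDiff ℝ 1 f) (hr : ContDiff ℝ 1 r)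
    (V : (Fin n → ℝ) → ℝ) (hV : Differentiable ℝ V)
    (x₀ : Fin n → ℝ) (a : Fin F → Fin m → ℝ)
    (x : ℕ → Fin n → ℝ) (hxdef : x = traj f x₀ (pad a))
    (Q : ℕ → (Fin m → ℝ) → ℝ)
    (hQdef : ∀ t, Q t = fun b => r (x t, b) + γ * V (f (x t, b)))
    (hbox : ∀ t : Fin F, ∀ i, a t i ∈ Set.Icc (-1 : ℝ) 1)
    (hgreedy : ∀ t : Fin F, ∀ b : Fin m → ℝ,
      (∀ i, b i ∈ Set.Icc (-1 : ℝ) 1) → Q t b ≤ Q t (a t))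
    (G : ℕ → Fin n → ℝ) (hGdef : ∀ t, G t = grad V (x t))
    (hGF : G F = 0)
    (hGrec : ∀ t < F, G t =
      gradX r (x t) (pad a t) + γ • (jacX f (x t) (pad a t))ᵀ.mulVec (G (t + 1))) :
    DifferentiableAt ℝ (Rtot F γ f r x₀) a ∧
    ∀ t : Fin F, ∀ i : Fin m,
      ((a t i ∈ Set.Ioo (-1 : ℝ) 1 ∧ fderiv ℝ (Q t) (a t) (Pi.single i 1) = 0) →
        fderiv ℝ (Rtot F γ f r x₀) a (Pi.single t (Pi.single i 1)) = 0) ∧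
      (a t i = 1 →
        0 ≤ fderiv ℝ (Rtot F γ f r x₀) a (Pi.single t (Pi.single i 1)) ∧
        (fderiv ℝ (Q t) (a t) (Pi.single i 1) ≠ 0 →
          0 < fderiv ℝ (Rtot F γ f r x₀) a (Pi.single t (Pi.single i 1)))) ∧
      (a t i = -1 →
        fderiv ℝ (Rtot F γ f r x₀) a (Pi.single t (Pi.single i 1)) ≤ 0 ∧
        (fderiv ℝ (Q t) (a t) (Pi.single i 1) ≠ 0 →
          fderiv ℝ (Rtot F γ f r x₀) a (Pi.single t (Pi.single i 1)) < 0)) := by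
  obtain ⟨hRdiff, hkey⟩ := key F γ f r hf hr V hV x₀ a x hxdef Q hQdef G hGdef hGF hGrec
  refine ⟨hRdiff, ?_⟩
  intro t i
  have hid := hkey t i
  have hQdiff : DifferentiableAt ℝ (Q t) (a t) := by
    rw [hQdef t]
    have hf1 : DifferentiableAt ℝ (fun b => f (x (t : ℕ), b)) (a t) :=
      ((hf.differentiable one_ne_zero) _).comp _
        ((differentiableAt_const _).prodMk differentiableAt_id)
    exact (((hr.differentiable one_ne_zero) _).comp _
        ((differentiableAt_const _).prodMk differentiableAt_id)).add
      (((hV _).comp _ hf1).const_mul γ)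
  have hγt : 0 < γ ^ (t : ℕ) := pow_pos hγ _
  refine ⟨?_, ?_, ?_⟩
  · rintro ⟨-, hq⟩
    rw [hid, hq, mul_zero]
  · intro h1
    have hq := max_right (Q t) (a t) hQdiff (hbox t) (hgreedy t) i h1
    exact ⟨by rw [hid]; exact mul_nonneg hγt.le hq,
      fun hne => by rw [hid]; exact mul_pos hγt (lt_of_le_of_ne hq (Ne.symm hne))⟩
  · intro h1
    have hq := max_left (Q t) (a t) hQdiff (hbox t) (hgreedy t) i h1
    exact ⟨by rw [hid]; nlinarith,
      fun hne => by rw [hid]; exact mul_neg_of_pos_of_neg hγt (lt_of_le_of_ne hq hne)⟩
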